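/- For a finite simple graph G with m edges, a_2(G) = m if and only if every vertex of G has degree at most 2 (equivalently, every connected component of G is a path graph or a cycle graph). -/
import Mathlib


open SimpleGraph Polynomial Finset

/-- `δ_S(v)`: the number of neighbors of `v` lying in the set `S`. -/
noncomputable def degIn {V : Type*} (G : SimpleGraph V) (S : Finset V) (v : V) : ℕ :=
  ((S : Set V) ∩ G.neighborSet v).ncard

/-- `δ(v)`: the degree of `v` in `G`. -/
noncomputable def degOf {V : Type*} (G : SimpleGraph V) (v : V) : ℕ :=
  (G.neighborSet v).ncard

/-- `S` is a strong defensive alliance in `G`: `S` is nonempty and every `v ∈ S`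
satisfies `2·δ_S(v) ≥ δ(v)`. -/
def IsStrongAlliance {V : Type*} (G : SimpleGraph V) (S : Finset V) : Prop :=
  S.Nonempty ∧ ∀ v ∈ S, degOf G v ≤ 2 * degIn G S v

/-- The alliances counted by the strong alliance polynomial: strong defensive alliances
whose induced subgraph is connected. -/
def IsCountedAlliance {V : Type*} (G : SimpleGraph V) (S : Finset V) : Prop :=
  IsStrongAlliance G S ∧ (G.induce (S : Set V)).Connected

/-- `a_k(G)`: the number of strong defensive alliances of cardinality `k` in `G`
whose induced subgraph is connected. -/
noncomputable def aCoeff {V : Type*} (G : SimpleGraph V) (k : ℕ) : ℕ :=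
  {S : Finset V | S.card = k ∧ IsCountedAlliance G S}.ncard

/-- The strong alliance polynomial `a(G;x) = Σ_k a_k(G) x^k`. -/
noncomputable def alliancePoly {V : Type*} [Fintype V] (G : SimpleGraph V) : Polynomial ℤ :=
  ∑ k ∈ Finset.range (Fintype.card V + 1), Polynomial.C (aCoeff G k : ℤ) * Polynomial.X ^ k

section Aux
variable {V : Type*}

/-- an unordered pair as a Finset -/
def pairFinset [DecidableEq V] : Sym2 V → Finset V :=
  Sym2.lift ⟨fun a b => {a, b}, fun a b => Finset.pair_comm a b⟩

@[simp] lemma pairFinset_mk [DecidableEq V] (a b : V) : pairFinset (s(a, b)) = {a, b} := rfl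

lemma induce_pair_connected_iff_adj [DecidableEq V] (G : SimpleGraph V) {u v : V}
    (huv : u ≠ v) :
    (G.induce (({u, v} : Finset V) : Set V)).Connected ↔ G.Adj u v := by
  constructor
  · intro hc
    by_contra hadj
    have hbot : (G.induce (({u, v} : Finset V) : Set V)) = ⊥ := by
      ext a b
      simp only [bot_adj, iff_false, comap_adj, Function.Embedding.coe_subtype]
      intro hab
      have ha := a.2
      have hb := b.2
      simp only [Finset.coe_insert, Finset.coe_singleton, Set.mem_insert_iff,
        Set.mem_singleton_iff] at ha hb
      rcases ha with ha | ha <;> rcases hb with hb | hb <;>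
        rw [ha, hb] at hab <;>
        first
          | exact G.irrefl hab
          | exact hadj hab
          | exact hadj hab.symm
    have hu : u ∈ (({u, v} : Finset V) : Set V) := by simp
    have hv : v ∈ (({u, v} : Finset V) : Set V) := by simp
    have := hc.preconnected ⟨u, hu⟩ ⟨v, hv⟩
    rw [hbot, reachable_bot] at this
    exact huv (congrArg Subtype.val this)
  · intro hadj
    have hu : u ∈ (({u, v} : Finset V) : Set V) := by simp
    have hv : v ∈ (({u, v} : Finset V) : Set V) := by simp
    haveI : Nonempty ↥(({u, v} : Finset V) : Set V) := ⟨⟨u, hu⟩⟩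
    refine ⟨fun a b => ?_⟩
    have ha := a.2
    have hb := b.2
    simp only [Finset.coe_insert, Finset.coe_singleton, Set.mem_insert_iff,
      Set.mem_singleton_iff] at ha hb
    have key : ∀ (x y : ↥(({u, v} : Finset V) : Set V)),
        (x : V) = u → (y : V) = v → (G.induce _).Reachable x y := by
      intro x y hx hy
      refine Adj.reachable ?_
      simp only [comap_adj, Function.Embedding.coe_subtype, hx, hy]
      exact hadj
    rcases ha with ha | ha <;> rcases hb with hb | hb
    · exact (Subtype.ext (ha.trans hb.symm)) ▸ Reachable.refl _
    · exact key a b ha hb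
    · exact (key b a hb ha).symm
    · exact (Subtype.ext (ha.trans hb.symm)) ▸ Reachable.refl _

lemma degIn_pair [DecidableEq V] (G : SimpleGraph V) {u v : V} (hadj : G.Adj u v) :
    degIn G {u, v} u = 1 := by
  have : (({u, v} : Finset V) : Set V) ∩ G.neighborSet u = {v} := by
    ext x
    simp only [Finset.coe_insert, Finset.coe_singleton, Set.mem_inter_iff, Set.mem_insert_iff,
      Set.mem_singleton_iff, mem_neighborSet]
    constructor
    · rintro ⟨hx | hx, hxa⟩
      · exact absurd (hx ▸ hxa) (G.irrefl)
      · exact hx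
    · rintro rfl; exact ⟨Or.inr rfl, hadj⟩
  rw [degIn, this, Set.ncard_singleton]

lemma counted_pair_iff [DecidableEq V] (G : SimpleGraph V) {u v : V} (huv : u ≠ v) :
    IsCountedAlliance G {u, v} ↔ G.Adj u v ∧ degOf G u ≤ 2 ∧ degOf G v ≤ 2 := by
  constructor
  · rintro ⟨⟨-, hall⟩, hc⟩
    have hadj : G.Adj u v := (induce_pair_connected_iff_adj G huv).1 hc
    have hu := hall u (by simp)
    have hv := hall v (by simp)
    rw [degIn_pair G hadj] at hu
    rw [Finset.pair_comm, degIn_pair G hadj.symm] at hv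
    exact ⟨hadj, by omega, by omega⟩
  · rintro ⟨hadj, hu, hv⟩
    refine ⟨⟨⟨u, by simp⟩, ?_⟩, (induce_pair_connected_iff_adj G huv).2 hadj⟩
    intro w hw
    rcases Finset.mem_insert.1 hw with rfl | hw
    · rw [degIn_pair G hadj]; omega
    · rw [Finset.mem_singleton] at hw
      subst hw
      rw [Finset.pair_comm, degIn_pair G hadj.symm]; omega

end Aux

lemma pairFinset_injOn {V : Type*} [DecidableEq V] (G : SimpleGraph V) :
    Set.InjOn pairFinset G.edgeSet := by
  intro e1 h1 e2 h2 heq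
  induction e1, e2 using Sym2.inductionOn₂ with
  | _ a b c d =>
    rw [G.mem_edgeSet] at h1
    have hab : a ≠ b := G.ne_of_adj h1
    simp only [pairFinset_mk] at heq
    rw [Sym2.eq_iff]
    have ha : a = c ∨ a = d := by
      have : a ∈ ({c, d} : Finset V) := by rw [← heq]; simp
      simpa using this
    have hb : b = c ∨ b = d := by
      have : b ∈ ({c, d} : Finset V) := by rw [← heq]; simp
      simpa using this
    rcases ha with rfl | rfl
    · rcases hb with rfl | rfl
      · exact absurd rfl hab
      · exact Or.inl ⟨rfl, rfl⟩
    · rcases hb with rfl | rfl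
      · exact Or.inr ⟨rfl, rfl⟩
      · exact absurd rfl hab

theorem stmt_4 {V : Type*} [Fintype V] (G : SimpleGraph V) :
    aCoeff G 2 = G.edgeSet.ncard ↔ ∀ v : V, degOf G v ≤ 2 := by
  classical
  set B : Set (Sym2 V) := {e | e ∈ G.edgeSet ∧ ∀ x ∈ e, degOf G x ≤ 2} with hB
  have himg : {S : Finset V | S.card = 2 ∧ IsCountedAlliance G S} = pairFinset '' B := by
    ext S
    simp only [Set.mem_setOf_eq, Set.mem_image]
    constructor
    · rintro ⟨hcard, hS⟩
      obtain ⟨u, v, huv, rfl⟩ := Finset.card_eq_two.1 hcard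
      obtain ⟨hadj, hu, hv⟩ := (counted_pair_iff G huv).1 hS
      refine ⟨s(u, v), ⟨(G.mem_edgeSet).2 hadj, ?_⟩, rfl⟩
      intro x hx
      rcases Sym2.mem_iff.1 hx with rfl | rfl
      · exact hu
      · exact hv
    · rintro ⟨e, ⟨he, hdeg⟩, rfl⟩
      induction e using Sym2.ind with
      | _ u v =>
        have hadj : G.Adj u v := (G.mem_edgeSet).1 he
        have huv : u ≠ v := G.ne_of_adj hadj
        refine ⟨Finset.card_pair huv, (counted_pair_iff G huv).2
          ⟨hadj, hdeg u (by simp), hdeg v (by simp)⟩⟩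
  have hsub : B ⊆ G.edgeSet := fun e he => he.1
  have hcount : aCoeff G 2 = B.ncard := by
    rw [aCoeff, himg, Set.ncard_image_of_injOn ((pairFinset_injOn G).mono hsub)]
  rw [hcount]
  constructor
  · intro h v
    have hBE : B = G.edgeSet :=
      Set.eq_of_subset_of_ncard_le hsub h.ge (Set.toFinite _)
    by_contra hv
    have hpos : 0 < degOf G v := by omega
    have hne : (G.neighborSet v).Nonempty := by
      rw [← Set.ncard_pos (Set.toFinite _)]; exact hpos
    obtain ⟨w, hw⟩ := hne
    have : s(v, w) ∈ B := hBE ▸ (G.mem_edgeSet).2 hw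
    exact hv (this.2 v (by simp))
  · intro h
    have hBE : B = G.edgeSet := by
      ext e; exact ⟨fun he => he.1, fun he => ⟨he, fun x _ => h x⟩⟩
    rw [hBE]
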